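/- arXiv:2006.09221 — 5 statements merged into one kernel-verified Lean document; each statement's English description precedes it below -/
import Mathlib

section
/- Let Ω be a probability space and f: Ω → ℂ an integrable random variable such that f(ω) ≠ 0 for all ω and the angle between f(ω₁) and f(ω₂) (viewed as nonzero vectors in ℝ²) is at most θ for all ω₁, ω₂ ∈ Ω, where 0 ≤ θ < 2π/3. Then |E f| ≥ cos(θ/2) · E |f|. -/
open MeasureTheory

/-- The angle between two complex numbers viewed as vectors in the plane. -/
noncomputable def Complex.angle (u v : ℂ) : ℝ :=
  Real.arccos ((u * (starRingEnd ℂ) v).re / (‖u‖ * ‖v‖))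

theorem stmt_2 {Ω : Type*} [MeasurableSpace Ω] (μ : Measure Ω) [IsProbabilityMeasure μ]
    (f : Ω → ℂ) (hf : Integrable f μ) (hne : ∀ ω, f ω ≠ 0)
    (θ : ℝ) (hθ0 : 0 ≤ θ) (hθ : θ < 2 * Real.pi / 3)
    (hangle : ∀ ω₁ ω₂, Complex.angle (f ω₁) (f ω₂) ≤ θ) :
    ‖∫ ω, f ω ∂μ‖ ≥ Real.cos (θ / 2) * ∫ ω, ‖f ω‖ ∂μ := by
  have hπ := Real.pi_pos
  have hΩ : Nonempty Ω := by
    by_contra h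
    rw [not_nonempty_iff] at h
    have h1 : μ Set.univ = 1 := measure_univ
    rw [Set.univ_eq_empty_iff.mpr h] at h1
    simp at h1
  obtain ⟨ω₀⟩ := hΩ
  set g : Ω → ℝ := fun ω => Complex.arg (f ω / f ω₀) with hg
  have habs0 : ‖f ω₀‖ ≠ 0 := by simp [hne ω₀]
  have habs0' : ((‖f ω₀‖ : ℝ) : ℂ) ≠ 0 := Complex.ofReal_ne_zero.mpr habs0
  set c : ℂ := f ω₀ / (‖f ω₀‖ : ℂ) with hc
  have hcabs : ‖c‖ = 1 := by
    rw [hc, norm_div]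
    simp [div_self habs0]
  have hcc : (starRingEnd ℂ) c * c = 1 := by
    have h1 := Complex.mul_conj c
    have h2 : Complex.normSq c = 1 := by
      rw [← Complex.sq_norm, hcabs]; norm_num
    rw [mul_comm, h1, h2, Complex.ofReal_one]
  have hrep : ∀ ω, f ω = (‖f ω‖ : ℂ) * c * Complex.exp ((g ω : ℂ) * Complex.I) := by
    intro ω
    have h := Complex.norm_mul_exp_arg_mul_I (f ω / f ω₀)
    rw [norm_div] at h
    symm
    calc (‖f ω‖ : ℂ) * c * Complex.exp ((g ω : ℂ) * Complex.I)
        = f ω₀ * ((‖f ω‖ / ‖f ω₀‖ : ℝ) * Complex.exp ((g ω : ℂ) * Complex.I)) := by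
          rw [hc]; push_cast; field_simp
      _ = f ω₀ * (f ω / f ω₀) := by rw [h]
      _ = f ω := by rw [mul_comm]; exact div_mul_cancel₀ _ (hne ω₀)
  have hconjI : ∀ x : ℝ, (starRingEnd ℂ) ((x : ℂ) * Complex.I) = -((x : ℂ) * Complex.I) := by
    intro x
    rw [map_mul, Complex.conj_ofReal, Complex.conj_I]; ring
  have hconjf : ∀ ω, (starRingEnd ℂ) (f ω) =
      (‖f ω‖ : ℂ) * (starRingEnd ℂ) c * Complex.exp (-((g ω : ℂ) * Complex.I)) := by
    intro ω
    conv_lhs => rw [hrep ω]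
    rw [map_mul, map_mul, Complex.conj_ofReal, ← Complex.exp_conj, hconjI]
  have hsplit : ∀ x y : ℝ, Complex.exp (((x - y : ℝ) : ℂ) * Complex.I) =
      Complex.exp ((x : ℂ) * Complex.I) * Complex.exp (-((y : ℂ) * Complex.I)) := by
    intro x y
    rw [← Complex.exp_add]
    congr 1
    push_cast
    ring
  have key : ∀ ω₁ ω₂, f ω₁ * (starRingEnd ℂ) (f ω₂) =
      ((‖f ω₁‖ * ‖f ω₂‖ : ℝ) : ℂ) *
        Complex.exp (((g ω₁ - g ω₂ : ℝ) : ℂ) * Complex.I) := by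
    intro ω₁ ω₂
    conv_lhs => rw [hconjf ω₂, hrep ω₁]
    rw [hsplit, Complex.ofReal_mul]
    linear_combination ((‖f ω₁‖ : ℂ) * (‖f ω₂‖ : ℂ) *
      Complex.exp ((g ω₁ : ℂ) * Complex.I) * Complex.exp (-((g ω₂ : ℂ) * Complex.I))) * hcc
  have hangeq : ∀ ω₁ ω₂, Complex.angle (f ω₁) (f ω₂) = Real.arccos (Real.cos (g ω₁ - g ω₂)) := by
    intro ω₁ ω₂
    unfold Complex.angle
    rw [key ω₁ ω₂, Complex.re_ofReal_mul, Complex.exp_ofReal_mul_I_re]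
    congr 1
    exact mul_div_cancel_left₀ _
      (mul_ne_zero (norm_ne_zero_iff.mpr (hne ω₁)) (norm_ne_zero_iff.mpr (hne ω₂)))
  have harg_mem : ∀ ω, |g ω| ≤ Real.pi := fun ω =>
    abs_le.mpr ⟨by linarith [Complex.neg_pi_lt_arg (f ω / f ω₀)], Complex.arg_le_pi _⟩
  have harccos : ∀ x : ℝ, |x| ≤ Real.pi → Real.arccos (Real.cos x) = |x| := by
    intro x hx
    rw [← Real.cos_abs, Real.arccos_cos (abs_nonneg x) hx]
  have hgθ : ∀ ω, |g ω| ≤ θ := by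
    intro ω
    have h := hangle ω ω₀
    rw [hangeq ω ω₀] at h
    have hg0 : g ω₀ = 0 := by simp [hg, div_self (hne ω₀)]
    rw [hg0, sub_zero, harccos _ (harg_mem ω)] at h
    exact h
  have hpair : ∀ ω₁ ω₂, |g ω₁ - g ω₂| ≤ θ := by
    intro ω₁ ω₂
    by_contra hlt
    push_neg at hlt
    have h := hangle ω₁ ω₂
    rw [hangeq ω₁ ω₂] at h
    have hΔ2 : |g ω₁ - g ω₂| ≤ 2 * θ := by
      calc |g ω₁ - g ω₂| ≤ |g ω₁| + |g ω₂| := abs_sub _ _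
        _ ≤ 2 * θ := by linarith [hgθ ω₁, hgθ ω₂]
    rcases le_or_gt |g ω₁ - g ω₂| Real.pi with hle | hgt
    · rw [harccos _ hle] at h
      linarith
    · have hcoseq : Real.cos (g ω₁ - g ω₂) = Real.cos (2 * Real.pi - |g ω₁ - g ω₂|) := by
        rw [Real.cos_two_pi_sub, Real.cos_abs]
      rw [hcoseq, Real.arccos_cos (by linarith) (by linarith)] at h
      linarith
  have hne_range : (Set.range g).Nonempty := ⟨g ω₀, ⟨ω₀, rfl⟩⟩
  have hbdd_above : BddAbove (Set.range g) := by
    refine ⟨θ, ?_⟩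
    rintro x ⟨ω, rfl⟩
    exact (abs_le.mp (hgθ ω)).2
  have hbdd_below : BddBelow (Set.range g) := by
    refine ⟨-θ, ?_⟩
    rintro x ⟨ω, rfl⟩
    exact (abs_le.mp (hgθ ω)).1
  set a := sInf (Set.range g) with ha
  set b := sSup (Set.range g) with hb
  have ha_le : ∀ ω, a ≤ g ω := fun ω => csInf_le hbdd_below ⟨ω, rfl⟩
  have hle_b : ∀ ω, g ω ≤ b := fun ω => le_csSup hbdd_above ⟨ω, rfl⟩
  have hba : b ≤ a + θ := by
    apply csSup_le hne_range
    rintro x ⟨ω₁, rfl⟩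
    have h1 : g ω₁ - θ ≤ a := by
      apply le_csInf hne_range
      rintro y ⟨ω₂, rfl⟩
      linarith [(abs_le.mp (hpair ω₁ ω₂)).2]
    linarith
  set m := (a + b) / 2 with hmdef
  have hm : ∀ ω, |g ω - m| ≤ θ / 2 := by
    intro ω
    rw [abs_le]
    constructor
    · have := ha_le ω; rw [hmdef]; linarith
    · have := hle_b ω; rw [hmdef]; linarith
  have hcos : ∀ ω, Real.cos (θ / 2) ≤ Real.cos (g ω - m) := by
    intro ω
    rw [show Real.cos (g ω - m) = Real.cos |g ω - m| from (Real.cos_abs _).symm]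
    exact Real.cos_le_cos_of_nonneg_of_le_pi (abs_nonneg _) (by linarith) (hm ω)
  set e : ℂ := c * Complex.exp ((m : ℂ) * Complex.I) with he
  have habse : ‖e‖ = 1 := by
    rw [he, norm_mul, hcabs, one_mul, Complex.norm_exp_ofReal_mul_I]
  have hconje : (starRingEnd ℂ) e = (starRingEnd ℂ) c * Complex.exp (-((m : ℂ) * Complex.I)) := by
    rw [he, map_mul, ← Complex.exp_conj, hconjI]
  have hpoint : ∀ ω, ((starRingEnd ℂ) e * f ω).re = ‖f ω‖ * Real.cos (g ω - m) := by
    intro ω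
    have hkey : (starRingEnd ℂ) e * f ω =
        ((‖f ω‖ : ℝ) : ℂ) * Complex.exp (((g ω - m : ℝ) : ℂ) * Complex.I) := by
      conv_lhs => rw [hconje, hrep ω]
      rw [hsplit]
      linear_combination ((‖f ω‖ : ℂ) * Complex.exp ((g ω : ℂ) * Complex.I) *
        Complex.exp (-((m : ℂ) * Complex.I))) * hcc
    rw [hkey, Complex.re_ofReal_mul, Complex.exp_ofReal_mul_I_re]
  have hinte : Integrable (fun ω => (starRingEnd ℂ) e * f ω) μ := hf.const_mul _
  have hint1 : Integrable (fun ω => ((starRingEnd ℂ) e * f ω).re) μ := by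
    simpa using hinte.re
  have heq : ∫ ω, ((starRingEnd ℂ) e * f ω).re ∂μ = ((starRingEnd ℂ) e * ∫ ω, f ω ∂μ).re := by
    rw [show ((starRingEnd ℂ) e * ∫ ω, f ω ∂μ) = ∫ ω, (starRingEnd ℂ) e * f ω ∂μ from
      (integral_const_mul _ _).symm]
    simpa using integral_re hinte
  have hre_le : ((starRingEnd ℂ) e * ∫ ω, f ω ∂μ).re ≤ ‖∫ ω, f ω ∂μ‖ := by
    calc ((starRingEnd ℂ) e * ∫ ω, f ω ∂μ).re
        ≤ ‖(starRingEnd ℂ) e * ∫ ω, f ω ∂μ‖ := Complex.re_le_norm _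
      _ = ‖∫ ω, f ω ∂μ‖ := by
          rw [norm_mul, Complex.norm_conj, habse, one_mul]
  have hmono : ∫ ω, Real.cos (θ / 2) * ‖f ω‖ ∂μ ≤ ∫ ω, ((starRingEnd ℂ) e * f ω).re ∂μ := by
    apply integral_mono (hf.norm.const_mul _) hint1
    intro ω
    show Real.cos (θ / 2) * ‖f ω‖ ≤ ((starRingEnd ℂ) e * f ω).re
    rw [hpoint ω, mul_comm]
    exact mul_le_mul_of_nonneg_left (hcos ω) (norm_nonneg _)
  rw [ge_iff_le, ← integral_const_mul]
  linarith
end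

section
/- Let g: [−1,1] → ℂ be given by an absolutely convergent power series g(t) = Σ_{a≥1} c_a t^a with Σ_{a≥1} |c_a| ≤ (θ/2)·cos(θ/2) for some 0 ≤ θ < 2π/3. Then for any t₁, t₂ ∈ [−1,1], the angle between e^{g(t₁)} and e^{g(t₂)} (as nonzero complex numbers) is at most θ. -/
theorem stmt_3 (c : ℕ → ℂ) (hc0 : c 0 = 0) (hsum : Summable fun a => ‖c a‖)
    (θ : ℝ) (hθ0 : 0 ≤ θ) (hθ : θ < 2 * Real.pi / 3)
    (hbound : ∑' a : ℕ, ‖c a‖ ≤ (θ / 2) * Real.cos (θ / 2))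
    (g : ℝ → ℂ) (hg : ∀ t ∈ Set.Icc (-1 : ℝ) 1, g t = ∑' a : ℕ, c a * (t : ℂ) ^ a) :
    ∀ t₁ ∈ Set.Icc (-1 : ℝ) 1, ∀ t₂ ∈ Set.Icc (-1 : ℝ) 1,
      Complex.angle (Complex.exp (g t₁)) (Complex.exp (g t₂)) ≤ θ := by
  intro t₁ ht₁ t₂ ht₂
  set S := ∑' a : ℕ, ‖c a‖ with hS
  -- bound |Im g t| ≤ S
  have key : ∀ t ∈ Set.Icc (-1 : ℝ) 1, |(g t).im| ≤ S := by
    intro t ht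
    have habs : |t| ≤ 1 := abs_le.2 ⟨ht.1, ht.2⟩
    have hle : ∀ a : ℕ, ‖c a * (t : ℂ) ^ a‖ ≤ ‖c a‖ := by
      intro a
      rw [norm_mul, norm_pow]
      calc ‖c a‖ * ‖(t : ℂ)‖ ^ a ≤ ‖c a‖ * 1 := by
            apply mul_le_mul_of_nonneg_left _ (norm_nonneg _)
            exact pow_le_one₀ (norm_nonneg _) (by simpa using habs)
        _ = ‖c a‖ := mul_one _
    have hsum' : Summable fun a => ‖c a * (t : ℂ) ^ a‖ :=
      hsum.of_nonneg_of_le (fun a => norm_nonneg _) hle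
    have h1 : ‖g t‖ ≤ S := by
      rw [hg t ht]
      calc ‖∑' a : ℕ, c a * (t : ℂ) ^ a‖ ≤ ∑' a, ‖c a * (t : ℂ) ^ a‖ :=
            norm_tsum_le_tsum_norm hsum'
        _ ≤ S := Summable.tsum_le_tsum hle hsum' hsum
    calc |(g t).im| ≤ ‖g t‖ := Complex.abs_im_le_norm _
      _ ≤ S := by exact h1
  have hθπ : θ ≤ Real.pi := by nlinarith [Real.pi_pos]
  have hd : |(g t₁).im - (g t₂).im| ≤ θ := by
    have h2S : 2 * S ≤ θ := by
      have hc1 : Real.cos (θ / 2) ≤ 1 := Real.cos_le_one _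
      nlinarith [hbound]
    calc |(g t₁).im - (g t₂).im| ≤ |(g t₁).im| + |(g t₂).im| := abs_sub _ _
      _ ≤ S + S := add_le_add (key _ ht₁) (key _ ht₂)
      _ = 2 * S := by ring
      _ ≤ θ := h2S
  have hangle : Complex.angle (Complex.exp (g t₁)) (Complex.exp (g t₂)) =
      Real.arccos (Real.cos ((g t₁).im - (g t₂).im)) := by
    unfold Complex.angle
    rw [← Complex.exp_conj, ← Complex.exp_add, Complex.exp_re]
    congr 1
    simp only [Complex.norm_exp, Complex.add_re, Complex.add_im, Complex.conj_re,
      Complex.conj_im]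
    rw [← Real.exp_add]
    have : Real.exp ((g t₁).re + (g t₂).re) > 0 := Real.exp_pos _
    field_simp
    ring_nf
  rw [hangle, ← Real.cos_abs, Real.arccos_cos (abs_nonneg _) (le_trans hd hθπ)]
  exact hd
end

section
/- Let g: [−1,1] → ℂ be g(t) = Σ_{a≥1} c_a t^a, an absolutely and uniformly convergent series with Σ_{a≥1} |c_a| ≤ (θ/2)·cos(θ/2) for some 0 ≤ θ < 2π/3, and let ν be a finite measure on [−1,1]. Then |∫ e^{g(t)} dν(t)| ≥ cos(θ/2) · ∫ |e^{g(t)}| dν(t). -/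
open MeasureTheory

theorem stmt_4 (c : ℕ → ℂ) (hc0 : c 0 = 0) (hsum : Summable fun a => ‖c a‖)
    (θ : ℝ) (hθ0 : 0 ≤ θ) (hθ : θ < 2 * Real.pi / 3)
    (hbound : ∑' a : ℕ, ‖c a‖ ≤ (θ / 2) * Real.cos (θ / 2))
    (g : ℝ → ℂ) (hg : ∀ t ∈ Set.Icc (-1 : ℝ) 1, g t = ∑' a : ℕ, c a * (t : ℂ) ^ a)
    (ν : Measure ℝ) [IsFiniteMeasure ν] :
    ‖∫ t in Set.Icc (-1 : ℝ) 1, Complex.exp (g t) ∂ν‖ ≥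
      Real.cos (θ / 2) * ∫ t in Set.Icc (-1 : ℝ) 1, ‖Complex.exp (g t)‖ ∂ν := by
  have hpi := Real.pi_pos
  set h : ℝ → ℂ := fun t => ∑' a : ℕ, c a * (t : ℂ) ^ a with hh
  -- termwise bound on Icc
  have hterm : ∀ (n : ℕ), ∀ t ∈ Set.Icc (-1 : ℝ) 1, ‖c n * (t : ℂ) ^ n‖ ≤ ‖c n‖ := by
    intro n t ht
    rw [Set.mem_Icc] at ht
    have ht1 : ‖(t : ℂ)‖ ≤ 1 := by
      rw [Complex.norm_real, Real.norm_eq_abs]; exact abs_le.2 ht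
    calc ‖c n * (t : ℂ) ^ n‖ = ‖c n‖ * ‖(t : ℂ)‖ ^ n := by rw [norm_mul, norm_pow]
      _ ≤ ‖c n‖ * 1 := by
          have := pow_le_one₀ (norm_nonneg _) ht1 (n := n)
          exact mul_le_mul_of_nonneg_left this (norm_nonneg _)
      _ = ‖c n‖ := mul_one _
  have hcont : ContinuousOn h (Set.Icc (-1 : ℝ) 1) := by
    have hu := tendstoUniformlyOn_tsum hsum (fun n t ht => hterm n t ht)
    exact hu.continuousOn (Filter.Eventually.frequently (Filter.Eventually.of_forall fun n =>
      (continuous_finset_sum _ fun i _ => by continuity).continuousOn))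
  have hθhalf : θ / 2 < Real.pi / 3 := by linarith
  have hθpi : θ / 2 ≤ Real.pi := by linarith
  have hnormb : ∀ t ∈ Set.Icc (-1 : ℝ) 1, ‖h t‖ ≤ θ / 2 * Real.cos (θ / 2) := by
    intro t ht
    have hsumt : Summable fun n => ‖c n * (t : ℂ) ^ n‖ :=
      Summable.of_nonneg_of_le (fun _ => norm_nonneg _) (fun n => hterm n t ht) hsum
    calc ‖h t‖ ≤ ∑' n, ‖c n * (t : ℂ) ^ n‖ := norm_tsum_le_tsum_norm hsumt
      _ ≤ ∑' n, ‖c n‖ := Summable.tsum_le_tsum (fun n => hterm n t ht) hsumt hsum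
      _ ≤ θ / 2 * Real.cos (θ / 2) := hbound
  have hcos1 : θ / 2 * Real.cos (θ / 2) ≤ θ / 2 := by
    nlinarith [Real.cos_le_one (θ / 2)]
  -- pointwise key inequality
  have key : ∀ t ∈ Set.Icc (-1 : ℝ) 1,
      Real.cos (θ / 2) * ‖Complex.exp (h t)‖ ≤ (Complex.exp (h t)).re := by
    intro t ht
    have him : |(h t).im| ≤ θ / 2 := by
      have := Complex.abs_im_le_norm (h t)
      calc |(h t).im| ≤ ‖h t‖ := this
        _ ≤ θ / 2 * Real.cos (θ / 2) := hnormb t ht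
        _ ≤ θ / 2 := hcos1
    have hcosge : Real.cos (θ / 2) ≤ Real.cos ((h t).im) := by
      have habs : Real.cos |(h t).im| = Real.cos ((h t).im) := Real.cos_abs _
      rw [← habs]
      exact Real.cos_le_cos_of_nonneg_of_le_pi (abs_nonneg _) hθpi him
    rw [Complex.exp_re, Complex.norm_exp]
    have hexp : (0 : ℝ) < Real.exp (h t).re := Real.exp_pos _
    nlinarith [hexp]
  -- replace g by h in the integrals
  have hgeq : Set.EqOn (fun t => Complex.exp (g t)) (fun t => Complex.exp (h t))
      (Set.Icc (-1 : ℝ) 1) := fun t ht => by simp only [hg t ht, hh]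
  have hgeq' : Set.EqOn (fun t => ‖Complex.exp (g t)‖) (fun t => ‖Complex.exp (h t)‖)
      (Set.Icc (-1 : ℝ) 1) := fun t ht => by simp only [hg t ht, hh]
  rw [setIntegral_congr_fun measurableSet_Icc hgeq, setIntegral_congr_fun measurableSet_Icc hgeq']
  have hInt : IntegrableOn (fun t => Complex.exp (h t)) (Set.Icc (-1 : ℝ) 1) ν :=
    (Complex.continuous_exp.comp_continuousOn hcont).integrableOn_compact isCompact_Icc
  have hIntn : IntegrableOn (fun t => ‖Complex.exp (h t)‖) (Set.Icc (-1 : ℝ) 1) ν := hInt.norm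
  calc Real.cos (θ / 2) * ∫ t in Set.Icc (-1 : ℝ) 1, ‖Complex.exp (h t)‖ ∂ν
      = ∫ t in Set.Icc (-1 : ℝ) 1, Real.cos (θ / 2) * ‖Complex.exp (h t)‖ ∂ν := by
        exact (integral_const_mul _ _).symm
    _ ≤ ∫ t in Set.Icc (-1 : ℝ) 1, (Complex.exp (h t)).re ∂ν :=
        setIntegral_mono_on (hIntn.const_mul _) hInt.re measurableSet_Icc key
    _ = (∫ t in Set.Icc (-1 : ℝ) 1, Complex.exp (h t) ∂ν).re := by simpa using integral_re hInt
    _ ≤ ‖∫ t in Set.Icc (-1 : ℝ) 1, Complex.exp (h t) ∂ν‖ := Complex.re_le_norm _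
end

section
/- Let q₁,…,q_m: ℝⁿ → ℝ be quadratic forms q_i(x) = (1/2)⟨Q_i x, x⟩ with real symmetric matrices Q_i satisfying ‖Σᵢ z_i Q_i‖ < 1/2 for all complex z₁,…,z_m with |z_i| ≤ 1. Then for every complex z with |z| ≤ 1, (2π)^{-n/2} ∫_{ℝⁿ} e^{-‖x‖²/2} ∏_{i=1}^m (sin²(z q_i(x)) / (z² q_i(x)²)) dx = ∫_{[−1,1]^m} ∏_{i=1}^m (1−|t_i|) · det(I − 2z√−1 Σᵢ t_i Q_i)^{-1/2} dt. -/
open MeasureTheory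

/-- `sin² w / w²`, interpreted as `1` at `w = 0`. -/
noncomputable def sinc2 (w : ℂ) : ℂ := if w = 0 then 1 else Complex.sin w ^ 2 / w ^ 2

section Prelude
open MeasureTheory Complex intervalIntegral Real


lemma halfint (a : ℂ) :
    ∫ t in (0:ℝ)..1, ((1 - t : ℝ) : ℂ) * Complex.exp (a * t)
      = if a = 0 then 1/2 else (Complex.exp a - 1 - a) / a ^ 2 := by
  split_ifs with ha
  · subst ha
    simp only [zero_mul, Complex.exp_zero, mul_one]
    rw [intervalIntegral.integral_ofReal]
    norm_num [intervalIntegral.integral_sub intervalIntegrable_const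
      (intervalIntegral.intervalIntegrable_id), integral_id]
  · have key : ∀ t : ℝ, t ∈ Set.uIcc (0:ℝ) 1 →
        HasDerivAt (fun u : ℝ => Complex.exp (a * u) * (-(u:ℂ)/a + (1/a + 1/a^2)))
          (((1 - t : ℝ) : ℂ) * Complex.exp (a * t)) t := by
      intro t _
      have h1 : HasDerivAt (fun u : ℂ => Complex.exp (a * u) * (-u/a + (1/a + 1/a^2)))
          (((1 - t : ℝ) : ℂ) * Complex.exp (a * (t:ℂ))) (t : ℂ) := by
        have hexp : HasDerivAt (fun u : ℂ => Complex.exp (a * u)) (a * Complex.exp (a * t)) t := by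
          simpa [mul_comm] using ((hasDerivAt_id (t:ℂ)).const_mul a).cexp
        have hlin : HasDerivAt (fun u : ℂ => -u/a + (1/a + 1/a^2)) (-1/a) (t:ℂ) := by
          exact (((hasDerivAt_id (t:ℂ)).neg).div_const a).add_const (1/a + 1/a^2)
        have := hexp.mul hlin
        refine this.congr_deriv ?_
        push_cast
        field_simp [ha]
        ring
      exact h1.comp_ofReal
    rw [intervalIntegral.integral_eq_sub_of_hasDerivAt key
      (Continuous.intervalIntegrable (by fun_prop) _ _)]
    push_cast
    field_simp [ha]
    simp only [mul_zero, Complex.exp_zero]; ring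

lemma fejer (w : ℂ) :
    ∫ t in Set.Icc (-1:ℝ) 1, ((1 - |t| : ℝ) : ℂ) * Complex.exp (2 * Complex.I * w * t)
      = sinc2 w := by
  set a : ℂ := 2 * Complex.I * w with ha
  have hcont : ∀ b : ℂ, Continuous fun t : ℝ => ((1 - |t| : ℝ) : ℂ) * Complex.exp (b * t) := by
    intro b; fun_prop
  have step1 : ∫ t in Set.Icc (-1:ℝ) 1, ((1 - |t| : ℝ) : ℂ) * Complex.exp (a * t)
      = (∫ t in (-1:ℝ)..0, ((1 - |t| : ℝ) : ℂ) * Complex.exp (a * t))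
        + ∫ t in (0:ℝ)..1, ((1 - |t| : ℝ) : ℂ) * Complex.exp (a * t) := by
    rw [MeasureTheory.integral_Icc_eq_integral_Ioc,
      ← intervalIntegral.integral_of_le (by norm_num : (-1:ℝ) ≤ 1),
      ← intervalIntegral.integral_add_adjacent_intervals
        ((hcont a).intervalIntegrable _ _) ((hcont a).intervalIntegrable _ _)]
  have neg_part : (∫ t in (-1:ℝ)..0, ((1 - |t| : ℝ) : ℂ) * Complex.exp (a * t))
      = ∫ t in (0:ℝ)..1, ((1 - |t| : ℝ) : ℂ) * Complex.exp (-a * t) := by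
    have := intervalIntegral.integral_comp_neg (a := 0) (b := 1)
      (fun t : ℝ => ((1 - |t| : ℝ) : ℂ) * Complex.exp (a * t))
    simp only [neg_zero, neg_neg] at this
    rw [← this]
    apply intervalIntegral.integral_congr
    intro t _
    simp only [abs_neg, Complex.ofReal_neg, mul_neg, neg_mul]
  have abs_eq : ∀ b : ℂ, (∫ t in (0:ℝ)..1, ((1 - |t| : ℝ) : ℂ) * Complex.exp (b * t))
      = ∫ t in (0:ℝ)..1, ((1 - t : ℝ) : ℂ) * Complex.exp (b * t) := by
    intro b
    apply intervalIntegral.integral_congr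
    intro t ht
    rw [Set.uIcc_of_le (by norm_num : (0:ℝ) ≤ 1)] at ht
    simp only
    rw [_root_.abs_of_nonneg ht.1]
  rw [step1, neg_part, abs_eq, abs_eq, halfint, halfint]
  by_cases hw : w = 0
  · subst hw
    norm_num [sinc2, ha]
  · have ha0 : a ≠ 0 := by simp [ha, hw, Complex.I_ne_zero]
    rw [if_neg (neg_ne_zero.mpr ha0), if_neg ha0, sinc2, if_neg hw]
    have hsin : Complex.sin w = (Complex.exp (-w * Complex.I) - Complex.exp (w * Complex.I)) * Complex.I / 2 := rfl
    set p : ℂ := Complex.exp (w * Complex.I) with hp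
    set q : ℂ := Complex.exp (-w * Complex.I) with hq
    have hpq : p * q = 1 := by rw [hp, hq, ← Complex.exp_add]; ring_nf; exact Complex.exp_zero
    have hea : Complex.exp a = p ^ 2 := by
      rw [hp, ← Complex.exp_nat_mul]; congr 1; ring
    have hena : Complex.exp (-a) = q ^ 2 := by
      rw [hq, ← Complex.exp_nat_mul]; congr 1; ring
    have ha2 : a ^ 2 = -(4 * w ^ 2) := by
      rw [ha]; rw [mul_pow, mul_pow, Complex.I_sq]; ring
    have hs : ((q - p) * Complex.I / 2) ^ 2 = -((q - p) ^ 2) / 4 := by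
      rw [div_pow, mul_pow, Complex.I_sq]; ring
    rw [hsin, hea, hena, ha2, hs]
    have hqp : p ^ 2 + q ^ 2 - 2 = (q - p) ^ 2 := by linear_combination 2 * hpq
    rw [neg_sq, ha2, ← add_div,
      show q ^ 2 - 1 - -a + (p ^ 2 - 1 - a) = p ^ 2 + q ^ 2 - 2 by ring, hqp]
    field_simp


lemma cube_prod {m : ℕ} (f : Fin m → ℝ → ℂ) :
    ∫ t in Set.pi Set.univ (fun _ : Fin m => Set.Icc (-1:ℝ) 1), ∏ i, f i (t i)
      = ∏ i, ∫ s in Set.Icc (-1:ℝ) 1, f i s := by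
  rw [← MeasureTheory.integral_indicator (MeasurableSet.univ_pi fun _ => measurableSet_Icc)]
  have h : (Set.pi Set.univ fun _ : Fin m => Set.Icc (-1:ℝ) 1).indicator
      (fun t => ∏ i, f i (t i)) = fun t => ∏ i, (Set.Icc (-1:ℝ) 1).indicator (f i) (t i) := by
    funext t
    by_cases ht : t ∈ Set.pi Set.univ fun _ : Fin m => Set.Icc (-1:ℝ) 1
    · rw [Set.indicator_of_mem ht]
      exact Finset.prod_congr rfl fun i _ => (Set.indicator_of_mem (ht i trivial) _).symm
    · rw [Set.indicator_of_notMem ht]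
      rw [Set.mem_pi] at ht
      push_neg at ht
      obtain ⟨i, _, hi⟩ := ht
      exact (Finset.prod_eq_zero (Finset.mem_univ i) (Set.indicator_of_notMem hi _)).symm
  rw [h, MeasureTheory.integral_fintype_prod_volume_eq_prod]
  exact Finset.prod_congr rfl fun i _ => MeasureTheory.integral_indicator measurableSet_Icc

noncomputable def qf {n : ℕ} (A : Matrix (Fin n) (Fin n) ℝ) (x : EuclideanSpace ℝ (Fin n)) : ℝ :=
  ∑ j, A.mulVec (fun k => x k) j * x j

lemma toCLM_apply {n : ℕ} (A : Matrix (Fin n) (Fin n) ℝ) (x : EuclideanSpace ℝ (Fin n)) (j : Fin n) :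
    (Matrix.toEuclideanCLM (𝕜 := ℝ) A x) j = A.mulVec (fun k => x k) j := by
  have := congrFun (congrArg (fun v => (v : Fin n → ℝ)) (Matrix.ofLp_toEuclideanCLM (𝕜 := ℝ) A x)) j
  simpa [Matrix.toLin'_apply] using this

lemma qf_eq_inner {n : ℕ} (A : Matrix (Fin n) (Fin n) ℝ) (x : EuclideanSpace ℝ (Fin n)) :
    qf A x = inner (𝕜 := ℝ) (Matrix.toEuclideanCLM (𝕜 := ℝ) A x) x := by
  simp [qf, PiLp.inner_apply, RCLike.inner_apply, conj_trivial, toCLM_apply]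
  exact Finset.sum_congr rfl fun _ _ => mul_comm _ _

lemma qf_sum_smul {n m : ℕ} (Q : Fin m → Matrix (Fin n) (Fin n) ℝ) (t : Fin m → ℝ)
    (x : EuclideanSpace ℝ (Fin n)) :
    qf (∑ i, t i • Q i) x = ∑ i, t i * qf (Q i) x := by
  unfold qf
  have : ∀ j, (∑ i, t i • Q i).mulVec (fun k => x k) j * x j
      = ∑ i, t i * ((Q i).mulVec (fun k => x k) j * x j) := by
    intro j
    simp only [Matrix.mulVec, dotProduct, Finset.sum_apply, Matrix.sum_apply, Matrix.smul_apply,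
      smul_eq_mul, Finset.sum_mul, Finset.mul_sum]
    rw [Finset.sum_comm]
    exact Finset.sum_congr rfl fun i _ => Finset.sum_congr rfl fun k _ => by ring
  simp_rw [this]
  rw [Finset.sum_comm]
  simp_rw [← Finset.mul_sum]

example {n : ℕ} (k : Fin n) : Continuous fun x : EuclideanSpace ℝ (Fin n) => x k := (continuous_apply k).comp (PiLp.continuous_ofLp 2 _)



noncomputable def rvec {n : ℕ} (v : Fin n → ℝ) : EuclideanSpace ℝ (Fin n) :=
  (WithLp.equiv 2 _).symm v

noncomputable def cvec {n : ℕ} (v : Fin n → ℝ) : EuclideanSpace ℂ (Fin n) :=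
  (WithLp.equiv 2 _).symm (fun k => (v k : ℂ))

lemma rvec_eq_self {n : ℕ} (x : EuclideanSpace ℝ (Fin n)) : rvec (fun k => x k) = x := rfl

lemma rvec_norm_eq {n : ℕ} (v : Fin n → ℝ) : ‖rvec v‖ = Real.sqrt (∑ k, v k ^ 2) := by
  simp [rvec, EuclideanSpace.norm_eq]

lemma cvec_norm {n : ℕ} (v : Fin n → ℝ) : ‖cvec v‖ = ‖rvec v‖ := by
  simp [cvec, rvec, EuclideanSpace.norm_eq]

lemma toCLMc_apply {n : ℕ} (A : Matrix (Fin n) (Fin n) ℝ) (v : Fin n → ℝ) :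
    Matrix.toEuclideanCLM (𝕜 := ℂ) (A.map Complex.ofReal) (cvec v) = cvec (A.mulVec v) := by
  ext j
  simp [cvec, Matrix.mulVec, dotProduct, Matrix.map_apply]

lemma mulVec_norm_le {n : ℕ} (A : Matrix (Fin n) (Fin n) ℝ) (x : EuclideanSpace ℝ (Fin n)) :
    ‖rvec (A.mulVec (fun k => x k))‖
      ≤ ‖Matrix.toEuclideanCLM (𝕜 := ℂ) (A.map Complex.ofReal)‖ * ‖x‖ := by
  have h1 : ‖rvec (A.mulVec (fun k => x k))‖
      = ‖Matrix.toEuclideanCLM (𝕜 := ℂ) (A.map Complex.ofReal) (cvec (fun k => x k))‖ := by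
    rw [toCLMc_apply, cvec_norm]
  rw [h1]
  calc ‖Matrix.toEuclideanCLM (𝕜 := ℂ) (A.map Complex.ofReal) (cvec (fun k => x k))‖
      ≤ ‖Matrix.toEuclideanCLM (𝕜 := ℂ) (A.map Complex.ofReal)‖ * ‖cvec (fun k => x k)‖ :=
        (Matrix.toEuclideanCLM (𝕜 := ℂ) (A.map Complex.ofReal)).le_opNorm _
    _ = _ := by rw [cvec_norm, rvec_eq_self]

lemma qf_abs_le {n : ℕ} (A : Matrix (Fin n) (Fin n) ℝ) (x : EuclideanSpace ℝ (Fin n)) :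
    |qf A x| ≤ ‖Matrix.toEuclideanCLM (𝕜 := ℂ) (A.map Complex.ofReal)‖ * ‖x‖ ^ 2 := by
  have h0 : qf A x = inner (𝕜 := ℝ) (rvec (A.mulVec (fun k => x k))) x := by
    simp [qf, PiLp.inner_apply, RCLike.inner_apply, conj_trivial, rvec]
    exact Finset.sum_congr rfl fun _ _ => mul_comm _ _
  rw [h0]
  calc |inner (𝕜 := ℝ) (rvec (A.mulVec (fun k => x k))) x|
      ≤ ‖rvec (A.mulVec (fun k => x k))‖ * ‖x‖ := abs_real_inner_le_norm _ _
    _ ≤ (‖Matrix.toEuclideanCLM (𝕜 := ℂ) (A.map Complex.ofReal)‖ * ‖x‖) * ‖x‖ :=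
        mul_le_mul_of_nonneg_right (mulVec_norm_le A x) (norm_nonneg _)
    _ = _ := by ring

lemma eig_abs_le {n : ℕ} {A : Matrix (Fin n) (Fin n) ℝ} (hA : A.IsHermitian) (k : Fin n) :
    |hA.eigenvalues k| ≤ ‖Matrix.toEuclideanCLM (𝕜 := ℂ) (A.map Complex.ofReal)‖ := by
  set v := hA.eigenvectorBasis k with hv
  have hnv : ‖v‖ = 1 := hA.eigenvectorBasis.orthonormal.1 k
  have hmv : A.mulVec (fun j => v j) = fun j => hA.eigenvalues k * v j := by
    have := hA.mulVec_eigenvectorBasis k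
    funext j
    exact congrFun this j
  have h1 : ‖rvec (A.mulVec (fun j => v j))‖ = |hA.eigenvalues k| := by
    rw [hmv, rvec_norm_eq]
    have : ∀ j, (hA.eigenvalues k * v j) ^ 2 = (hA.eigenvalues k)^2 * (v j)^2 := fun j => by ring
    simp_rw [this]
    rw [← Finset.mul_sum, Real.sqrt_mul (sq_nonneg _), Real.sqrt_sq_eq_abs]
    have : Real.sqrt (∑ j, v j ^ 2) = ‖v‖ := by
      rw [← rvec_norm_eq, rvec_eq_self]
    rw [this, hnv, mul_one]
  have h2 := mulVec_norm_le A v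
  rw [h1, hnv, mul_one] at h2
  exact h2



lemma toCLM_eigenvector {n : ℕ} {A : Matrix (Fin n) (Fin n) ℝ} (hA : A.IsHermitian) (k : Fin n) :
    Matrix.toEuclideanCLM (𝕜 := ℝ) A (hA.eigenvectorBasis k)
      = hA.eigenvalues k • hA.eigenvectorBasis k := by
  have h := hA.mulVec_eigenvectorBasis k
  ext j
  have := toCLM_apply A (hA.eigenvectorBasis k) j
  rw [this]
  exact congrFun h j

lemma qf_repr_symm {n : ℕ} {A : Matrix (Fin n) (Fin n) ℝ} (hA : A.IsHermitian)
    (y : EuclideanSpace ℝ (Fin n)) :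
    qf A (hA.eigenvectorBasis.repr.symm y) = ∑ k, hA.eigenvalues k * (y k) ^ 2 := by
  set b := hA.eigenvectorBasis with hb
  set x := b.repr.symm y with hx
  have hxy : b.repr x = y := b.repr.apply_symm_apply y
  rw [qf_eq_inner]
  have hrep : Matrix.toEuclideanCLM (𝕜 := ℝ) A x
      = ∑ k, (b.repr x k * hA.eigenvalues k) • b k := by
    conv_lhs => rw [← b.sum_repr x]
    rw [map_sum]
    congr 1
    funext k
    rw [_root_.map_smul, toCLM_eigenvector hA k, smul_smul]
  rw [hrep, sum_inner]
  rw [show ∑ k, hA.eigenvalues k * (y k)^2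
    = ∑ k, hA.eigenvalues k * (b.repr x k)^2 by rw [hxy]]
  congr 1
  funext k
  rw [real_inner_smul_left, ← b.repr_apply_apply]
  rw [hxy]
  ring

lemma norm_sq_repr_symm {n : ℕ} {A : Matrix (Fin n) (Fin n) ℝ} (hA : A.IsHermitian)
    (y : EuclideanSpace ℝ (Fin n)) :
    ‖hA.eigenvectorBasis.repr.symm y‖ ^ 2 = ∑ k, (y k) ^ 2 := by
  rw [LinearIsometryEquiv.norm_map, EuclideanSpace.norm_eq, Real.sq_sqrt]
  · simp
  · positivity

lemma gauss_diag {n : ℕ} {A : Matrix (Fin n) (Fin n) ℝ} (hA : A.IsHermitian) (z : ℂ)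
    (hre : ∀ k, 0 < ((1:ℂ)/2 - Complex.I * z * (hA.eigenvalues k : ℂ)).re) :
    ∫ x : EuclideanSpace ℝ (Fin n),
        Complex.exp (-(‖x‖:ℂ)^2/2 + Complex.I * z * (qf A x : ℂ))
      = ∏ k, ((Real.pi : ℂ) / ((1:ℂ)/2 - Complex.I * z * (hA.eigenvalues k : ℂ))) ^ ((1:ℂ)/2) := by
  set b := hA.eigenvectorBasis with hb
  -- change of variables via the eigenbasis
  rw [← (b.measurePreserving_repr_symm).integral_comp
    (b.repr.symm.toHomeomorph.measurableEmbedding) _]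
  have key : ∀ y : EuclideanSpace ℝ (Fin n),
      Complex.exp (-(‖b.repr.symm y‖:ℂ)^2/2 + Complex.I * z * (qf A (b.repr.symm y) : ℂ))
      = Complex.exp (-∑ k, ((1:ℂ)/2 - Complex.I * z * (hA.eigenvalues k : ℂ)) * (y k : ℂ)^2
          + ∑ k, (0:ℂ) * (y k : ℂ)) := by
    intro y
    congr 1
    have h1 : (‖b.repr.symm y‖:ℂ)^2 = ∑ k, (y k : ℂ)^2 := by
      have := norm_sq_repr_symm hA y
      push_cast [← this]
      norm_cast
    have h2 : (qf A (b.repr.symm y) : ℂ) = ∑ k, (hA.eigenvalues k : ℂ) * (y k : ℂ)^2 := by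
      rw [qf_repr_symm hA y]
      push_cast
      rfl
    rw [h1, h2]
    have hterm : ∀ k : Fin n, ((1:ℂ)/2 - Complex.I * z * (hA.eigenvalues k : ℂ)) * (y k : ℂ)^2
        = (y k : ℂ)^2/2 - Complex.I * z * ((hA.eigenvalues k : ℂ) * (y k : ℂ)^2) := fun k => by ring
    simp only [hterm, Finset.sum_sub_distrib, zero_mul, Finset.sum_const_zero, add_zero,
      ← Finset.sum_div, Finset.mul_sum]
    ring
  simp_rw [key]
  -- transfer to the pi space
  have hmp := MeasurePreserving.symm _ (EuclideanSpace.volume_preserving_symm_measurableEquiv_toLp (Fin n))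
  rw [← hmp.integral_comp (MeasurableEquiv.measurableEmbedding _)]
  have key2 : ∀ v : Fin n → ℝ,
      Complex.exp (-∑ k, ((1:ℂ)/2 - Complex.I * z * (hA.eigenvalues k : ℂ))
          * (((MeasurableEquiv.toLp 2 (Fin n → ℝ)).symm.symm v : EuclideanSpace ℝ (Fin n)) k : ℂ)^2
        + ∑ k, (0:ℂ) * (((MeasurableEquiv.toLp 2 (Fin n → ℝ)).symm.symm v : EuclideanSpace ℝ (Fin n)) k : ℂ))
      = Complex.exp (-∑ k, ((1:ℂ)/2 - Complex.I * z * (hA.eigenvalues k : ℂ)) * ((v k : ℝ) : ℂ)^2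
          + ∑ k, (0:ℂ) * ((v k : ℝ) : ℂ)) := by
    intro v
    rfl
  simp_rw [key2]
  rw [GaussianFourier.integral_cexp_neg_sum_mul_add hre (fun _ => 0)]
  congr 1
  funext k
  simp


lemma re_cpow_half {d : ℂ} (hd : 0 < d.re) : 0 < (d ^ ((1:ℂ)/2)).re := by
  have hd0 : d ≠ 0 := by
    intro h; rw [h] at hd; simp at hd
  rw [Complex.cpow_def_of_ne_zero hd0, Complex.exp_re]
  have him : (Complex.log d * ((1:ℂ)/2)).im = d.arg / 2 := by
    simp [Complex.mul_im, Complex.log_im]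
    ring
  rw [him]
  have harg : |d.arg| < Real.pi / 2 := Complex.abs_arg_lt_pi_div_two_iff.mpr (Or.inl hd)
  have : Real.cos (d.arg / 2) > 0 := by
    apply Real.cos_pos_of_mem_Ioo
    constructor
    · nlinarith [abs_lt.mp harg, Real.pi_pos]
    · nlinarith [abs_lt.mp harg, Real.pi_pos]
  positivity

lemma sq_cpow_half {d : ℂ} (hd0 : d ≠ 0) : d ^ ((1:ℂ)/2) * d ^ ((1:ℂ)/2) = d := by
  rw [← Complex.cpow_add _ _ hd0]
  norm_num

lemma half_pow {d : ℂ} (hd : 0 < d.re) :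
    ((Real.pi : ℂ) / (d / 2)) ^ ((1:ℂ)/2) = ((2 * Real.pi : ℝ) : ℂ) ^ ((1:ℂ)/2) * d ^ (-(1:ℂ)/2) := by
  have hd0 : d ≠ 0 := fun h => by rw [h] at hd; simp at hd
  have hπ : (0:ℝ) < 2 * Real.pi := by positivity
  have hπc : ((2 * Real.pi : ℝ) : ℂ) ≠ 0 := by
    simpa using ne_of_gt hπ
  have hbase : (Real.pi : ℂ) / (d / 2) = ((2 * Real.pi : ℝ) : ℂ) / d := by
    push_cast
    field_simp
  rw [hbase]
  have hdiv : (((2 * Real.pi : ℝ) : ℂ) / d).re > 0 := by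
    rw [div_eq_mul_inv, Complex.mul_re]
    simp only [Complex.ofReal_re, Complex.ofReal_im, zero_mul, sub_zero]
    have : 0 < (d⁻¹).re := by
      rw [Complex.inv_re]
      exact div_pos hd (Complex.normSq_pos.mpr hd0)
    positivity
  have hdiv0 : ((2 * Real.pi : ℝ) : ℂ) / d ≠ 0 := by
    intro h; rw [h] at hdiv; simp at hdiv
  set u := (((2 * Real.pi : ℝ) : ℂ) / d) ^ ((1:ℂ)/2) with hu
  set v := ((2 * Real.pi : ℝ) : ℂ) ^ ((1:ℂ)/2) * d ^ (-(1:ℂ)/2) with hvdef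
  have hu2 : u * u = ((2 * Real.pi : ℝ) : ℂ) / d := sq_cpow_half hdiv0
  have hv2 : v * v = ((2 * Real.pi : ℝ) : ℂ) / d := by
    rw [hvdef]
    have h1 : ((2 * Real.pi : ℝ) : ℂ) ^ ((1:ℂ)/2) * ((2 * Real.pi : ℝ) : ℂ) ^ ((1:ℂ)/2)
        = ((2 * Real.pi : ℝ) : ℂ) := sq_cpow_half hπc
    have h2 : d ^ (-(1:ℂ)/2) * d ^ (-(1:ℂ)/2) = d⁻¹ := by
      rw [← Complex.cpow_add _ _ hd0]
      norm_num [Complex.cpow_neg_one]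
    calc ((2 * Real.pi : ℝ) : ℂ) ^ ((1:ℂ)/2) * d ^ (-(1:ℂ)/2)
          * (((2 * Real.pi : ℝ) : ℂ) ^ ((1:ℂ)/2) * d ^ (-(1:ℂ)/2))
        = (((2 * Real.pi : ℝ) : ℂ) ^ ((1:ℂ)/2) * ((2 * Real.pi : ℝ) : ℂ) ^ ((1:ℂ)/2))
          * (d ^ (-(1:ℂ)/2) * d ^ (-(1:ℂ)/2)) := by ring
      _ = ((2 * Real.pi : ℝ) : ℂ) * d⁻¹ := by rw [h1, h2]
      _ = ((2 * Real.pi : ℝ) : ℂ) / d := by rw [div_eq_mul_inv]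
  have hure : 0 < u.re := re_cpow_half hdiv
  have hvre : 0 < v.re := by
    rw [hvdef]
    have h3 : ((2 * Real.pi : ℝ) : ℂ) ^ ((1:ℂ)/2) = ((((2 * Real.pi : ℝ)) ^ ((1:ℝ)/2) : ℝ) : ℂ) := by
      rw [Complex.ofReal_cpow (le_of_lt hπ)]
      norm_num
    rw [h3]
    have h4 : d ^ (-(1:ℂ)/2) = (d ^ ((1:ℂ)/2))⁻¹ := by
      rw [show (-(1:ℂ)/2) = -((1:ℂ)/2) by norm_num, Complex.cpow_neg]
    rw [h4, Complex.mul_re]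
    simp only [Complex.ofReal_re, Complex.ofReal_im, zero_mul, sub_zero]
    have h5 : 0 < ((d ^ ((1:ℂ)/2))⁻¹).re := by
      rw [Complex.inv_re]
      exact div_pos (re_cpow_half hd) (Complex.normSq_pos.mpr (by
        intro h
        have := re_cpow_half hd
        rw [h] at this
        simp at this))
    have h6 : 0 < (2 * Real.pi) ^ ((1:ℝ)/2) := Real.rpow_pos_of_pos hπ _
    positivity
  have hfac : (u - v) * (u + v) = 0 := by
    have : u * u - v * v = 0 := by rw [hu2, hv2]; ring
    calc (u - v) * (u + v) = u * u - v * v := by ring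
    _ = 0 := this
  rcases mul_eq_zero.mp hfac with h | h
  · exact sub_eq_zero.mp h
  · exfalso
    have : (u + v).re = 0 := by rw [h]; simp
    rw [Complex.add_re] at this
    linarith

lemma prefactor_cancel (n : ℕ) :
    (((2 * Real.pi) ^ (-(n : ℝ) / 2) : ℝ) : ℂ) * (((2 * Real.pi : ℝ) : ℂ) ^ ((1:ℂ)/2)) ^ n = 1 := by
  have hπ : (0:ℝ) < 2 * Real.pi := by positivity
  have hπc : ((2 * Real.pi : ℝ) : ℂ) ≠ 0 := by simpa using ne_of_gt hπ
  rw [← Complex.cpow_nat_mul]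
  rw [Complex.ofReal_cpow (le_of_lt hπ)]
  rw [← Complex.cpow_add _ _ hπc]
  rw [show ((-(n:ℝ)/2 : ℝ) : ℂ) + (n : ℂ) * ((1:ℂ)/2) = 0 by push_cast; ring]
  exact Complex.cpow_zero _


lemma exists_bound {n m : ℕ} (Q : Fin m → Matrix (Fin n) (Fin n) ℝ)
    (hnorm : ∀ z : Fin m → ℂ, (∀ i, ‖z i‖ ≤ 1) →
      ‖Matrix.toEuclideanCLM (𝕜 := ℂ) (∑ i, z i • (Q i).map Complex.ofReal)‖ < 1 / 2) :
    ∃ c : ℝ, 0 ≤ c ∧ c < 1 / 2 ∧ ∀ z : Fin m → ℂ, (∀ i, ‖z i‖ ≤ 1) →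
      ‖Matrix.toEuclideanCLM (𝕜 := ℂ) (∑ i, z i • (Q i).map Complex.ofReal)‖ ≤ c := by
  classical
  set T : Fin m → (EuclideanSpace ℂ (Fin n) →L[ℂ] EuclideanSpace ℂ (Fin n)) :=
    fun i => Matrix.toEuclideanCLM (𝕜 := ℂ) ((Q i).map Complex.ofReal) with hT
  have key : ∀ z : Fin m → ℂ,
      Matrix.toEuclideanCLM (𝕜 := ℂ) (∑ i, z i • (Q i).map Complex.ofReal)
        = ∑ i, z i • T i := by
    intro z
    rw [map_sum]
    congr 1
    funext i
    rw [_root_.map_smul]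
  set S : Set (Fin m → ℂ) := Set.pi Set.univ fun _ => Metric.closedBall (0:ℂ) 1 with hS
  have hScompact : IsCompact S := isCompact_univ_pi fun _ => isCompact_closedBall _ _
  have hSne : S.Nonempty := ⟨0, fun i _ => by simp⟩
  have hf : Continuous fun z : Fin m → ℂ => ‖∑ i, z i • T i‖ := by
    apply Continuous.norm
    exact continuous_finset_sum _ fun i _ => (continuous_apply i).smul continuous_const
  obtain ⟨z₀, hz₀S, hmax⟩ := hScompact.exists_isMaxOn hSne hf.continuousOn
  refine ⟨‖∑ i, z₀ i • T i‖, norm_nonneg _, ?_, ?_⟩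
  · have := hnorm z₀ (fun i => by
      have := hz₀S i (Set.mem_univ i)
      simpa [Metric.mem_closedBall, dist_zero_right] using this)
    rwa [key] at this
  · intro z hz
    rw [key]
    exact hmax (fun i _ => by
      simp only [Metric.mem_closedBall, dist_zero_right]
      exact hz i)
end Prelude
section MainProof
open MeasureTheory Complex

theorem stmt_6 (n m : ℕ) (Q : Fin m → Matrix (Fin n) (Fin n) ℝ)
    (hQ : ∀ i, (Q i).IsHermitian)
    (hnorm : ∀ z : Fin m → ℂ, (∀ i, ‖z i‖ ≤ 1) →
      ‖Matrix.toEuclideanCLM (𝕜 := ℂ) (∑ i, z i • (Q i).map Complex.ofReal)‖ < 1 / 2)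
    (z : ℂ) (hz : ‖z‖ ≤ 1) :
    (((2 * Real.pi) ^ (-(n : ℝ) / 2) : ℝ) : ℂ) *
      ∫ x : EuclideanSpace ℝ (Fin n),
        (Real.exp (-‖x‖ ^ 2 / 2) : ℂ) *
          ∏ i, sinc2 (z * (((1 / 2 : ℝ) * ∑ j, (Q i).mulVec (fun k => x k) j * x j : ℝ) : ℂ)) =
    ∫ t in Set.pi Set.univ (fun _ : Fin m => Set.Icc (-1 : ℝ) 1),
      ((∏ i, (1 - |t i|) : ℝ) : ℂ) *
        ∏ k : Fin n,
          (1 - 2 * z * Complex.I *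
            ((Matrix.IsHermitian.eigenvalues
              (show (∑ i, t i • Q i).IsHermitian by
                unfold Matrix.IsHermitian
                rw [Matrix.conjTranspose_sum]
                exact Finset.sum_congr rfl fun i _ => by
                  rw [Matrix.conjTranspose_smul, (hQ i)]; norm_num) k : ℝ) : ℂ))
            ^ (-(1 : ℂ) / 2) := by
  classical
  obtain ⟨c, hc0, hchalf, hcb⟩ := exists_bound Q hnorm
  set cube : Set (Fin m → ℝ) := Set.pi Set.univ (fun _ : Fin m => Set.Icc (-1:ℝ) 1) with hcube
  have hcubeM : MeasurableSet cube := MeasurableSet.univ_pi fun _ => measurableSet_Icc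
  have hAtH : ∀ t : Fin m → ℝ, (∑ i, t i • Q i).IsHermitian := fun t => by
    unfold Matrix.IsHermitian
    rw [Matrix.conjTranspose_sum]
    exact Finset.sum_congr rfl fun i _ => by
      rw [Matrix.conjTranspose_smul, (hQ i)]; norm_num
  have hopc : ∀ t ∈ cube, ‖Matrix.toEuclideanCLM (𝕜 := ℂ)
      ((∑ i, t i • Q i).map Complex.ofReal)‖ ≤ c := by
    intro t ht
    have hmap : (∑ i, t i • Q i).map Complex.ofReal
        = ∑ i, ((t i : ℂ)) • (Q i).map Complex.ofReal := by
      ext j k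
      simp only [Matrix.map_apply, Matrix.sum_apply, Matrix.smul_apply, smul_eq_mul]
      push_cast
      rfl
    rw [hmap]
    refine hcb _ (fun i => ?_)
    have h1 := ht i (Set.mem_univ i)
    rw [Complex.norm_real, Real.norm_eq_abs]
    exact abs_le.mpr ⟨h1.1, h1.2⟩
  have heig : ∀ t ∈ cube, ∀ k, |(hAtH t).eigenvalues k| ≤ c := fun t ht k =>
    le_trans (eig_abs_le (hAtH t) k) (hopc t ht)
  have hqb : ∀ t ∈ cube, ∀ x : EuclideanSpace ℝ (Fin n),
      |qf (∑ i, t i • Q i) x| ≤ c * ‖x‖^2 := fun t ht x =>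
    le_trans (qf_abs_le _ x) (mul_le_mul_of_nonneg_right (hopc t ht) (by positivity))
  have hzim : |z.im| ≤ 1 := le_trans (Complex.abs_im_le_norm z) hz
  have hre : ∀ t ∈ cube, ∀ k,
      0 < ((1:ℂ)/2 - Complex.I * z * ((hAtH t).eigenvalues k : ℂ)).re := by
    intro t ht k
    have h1 : ((1:ℂ)/2 - Complex.I * z * ((hAtH t).eigenvalues k : ℂ)).re
        = 1/2 + z.im * (hAtH t).eigenvalues k := by
      simp [Complex.sub_re, Complex.mul_re, Complex.mul_im, Complex.I_re, Complex.I_im,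
        Complex.ofReal_re, Complex.ofReal_im]
    rw [h1]
    have h4 : |z.im * ((hAtH t).eigenvalues k)| ≤ c := by
      rw [abs_mul]
      calc |z.im| * |(hAtH t).eigenvalues k| ≤ 1 * c :=
        mul_le_mul hzim (heig t ht k) (abs_nonneg _) zero_le_one
      _ = c := one_mul c
    have h5 := abs_le.mp h4
    linarith
  set F : (Fin m → ℝ) → EuclideanSpace ℝ (Fin n) → ℂ := fun t x =>
    ((∏ i, (1 - |t i|) : ℝ) : ℂ)
      * Complex.exp (-(‖x‖:ℂ)^2/2 + Complex.I * z * ((qf (∑ i, t i • Q i) x : ℝ) : ℂ)) with hF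
  -- step 1: pointwise in x, the product of sinc2 is an integral over the cube
  have hsinc : ∀ x : EuclideanSpace ℝ (Fin n),
      (Real.exp (-‖x‖ ^ 2 / 2) : ℂ) *
        ∏ i, sinc2 (z * (((1 / 2 : ℝ) * ∑ j, (Q i).mulVec (fun k => x k) j * x j : ℝ) : ℂ))
      = ∫ t in cube, F t x := by
    intro x
    have e1 : ∀ i : Fin m,
        sinc2 (z * (((1 / 2 : ℝ) * ∑ j, (Q i).mulVec (fun k => x k) j * x j : ℝ) : ℂ))
        = ∫ s in Set.Icc (-1:ℝ) 1, ((1 - |s| : ℝ) : ℂ) * Complex.exp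
            (2 * Complex.I * (z * (((1 / 2 : ℝ) *
              ∑ j, (Q i).mulVec (fun k => x k) j * x j : ℝ) : ℂ)) * s) :=
      fun i => (fejer _).symm
    simp_rw [e1]
    rw [← cube_prod (fun i s => ((1 - |s| : ℝ) : ℂ) * Complex.exp
      (2 * Complex.I * (z * (((1 / 2 : ℝ) *
        ∑ j, (Q i).mulVec (fun k => x k) j * x j : ℝ) : ℂ)) * s))]
    rw [← MeasureTheory.integral_const_mul]
    apply integral_congr_ae (Filter.Eventually.of_forall fun t => ?_)
    simp only [hF]
    rw [Finset.prod_mul_distrib, ← Complex.exp_sum,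
      show ((Real.exp (-‖x‖ ^ 2 / 2) : ℝ) : ℂ)
        = Complex.exp ((-‖x‖ ^ 2 / 2 : ℝ) : ℂ) from Complex.ofReal_exp _,
      mul_left_comm, ← Complex.exp_add]
    congr 1
    · push_cast
      rfl
    · congr 1
      have hqe : ((qf (∑ i, t i • Q i) x : ℝ) : ℂ)
          = ∑ i, (t i : ℂ) * ((qf (Q i) x : ℝ) : ℂ) := by
        rw [qf_sum_smul]
        push_cast
        rfl
      rw [hqe, Finset.mul_sum]
      congr 1
      · push_cast
        ring
      · refine Finset.sum_congr rfl fun i _ => ?_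
        show 2 * Complex.I * (z * (((1 / 2 : ℝ) * qf (Q i) x : ℝ) : ℂ)) * (t i : ℂ)
          = Complex.I * z * ((t i : ℂ) * ((qf (Q i) x : ℝ) : ℂ))
        push_cast
        ring
  -- finiteness of the cube measure
  have hvol : volume cube < ⊤ := (isCompact_univ_pi (fun _ => isCompact_Icc)).measure_lt_top
  haveI : Fact (volume cube < ⊤) := ⟨hvol⟩
  -- continuity of F
  have hqcont : ∀ A : Matrix (Fin n) (Fin n) ℝ,
      Continuous fun x : EuclideanSpace ℝ (Fin n) => qf A x := by
    intro A
    unfold qf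
    apply continuous_finset_sum
    intro j _
    refine Continuous.mul ?_ ((continuous_apply j).comp (PiLp.continuous_ofLp 2 _))
    unfold Matrix.mulVec dotProduct
    exact continuous_finset_sum _ fun k _ => continuous_const.mul ((continuous_apply k).comp (PiLp.continuous_ofLp 2 _))
  have hFcont : Continuous (Function.uncurry F) := by
    simp only [hF, Function.uncurry]
    apply Continuous.mul
    · apply Complex.continuous_ofReal.comp
      apply continuous_finset_prod
      intro i _
      exact continuous_const.sub ((continuous_apply i).comp continuous_fst).abs
    · apply Complex.continuous_exp.comp
      apply Continuous.add
      · apply Continuous.div_const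
        apply Continuous.neg
        apply Continuous.pow
        exact Complex.continuous_ofReal.comp (continuous_norm.comp continuous_snd)
      · apply Continuous.mul continuous_const
        apply Complex.continuous_ofReal.comp
        have hfun : (fun p : (Fin m → ℝ) × EuclideanSpace ℝ (Fin n) =>
            qf (∑ i, p.1 i • Q i) p.2) = fun p => ∑ i, p.1 i * qf (Q i) p.2 :=
          funext fun p => qf_sum_smul Q p.1 p.2
        show Continuous fun p : (Fin m → ℝ) × EuclideanSpace ℝ (Fin n) =>
          qf (∑ i, p.1 i • Q i) p.2
        rw [hfun]
        apply continuous_finset_sum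
        intro i _
        exact ((continuous_apply i).comp continuous_fst).mul ((hqcont (Q i)).comp continuous_snd)
  -- integrability of F on the product
  have hb2 : (0:ℝ) < 1/2 - c := by linarith
  have hgauss_int : Integrable (fun x : EuclideanSpace ℝ (Fin n) =>
      Real.exp (-(1/2 - c) * ‖x‖^2)) volume := by
    have h5 := (GaussianFourier.integrable_cexp_neg_mul_sq_norm_add
      (V := EuclideanSpace ℝ (Fin n)) (b := ((1/2 - c : ℝ) : ℂ))
      (by simpa using hb2) 0 0).norm
    have h6 : ∀ v : EuclideanSpace ℝ (Fin n),
        ‖Complex.exp (-((1/2 - c : ℝ) : ℂ) * (‖v‖:ℂ)^2 + 0 * (inner ℝ (0:EuclideanSpace ℝ (Fin n)) v : ℝ))‖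
          = Real.exp (-(1/2 - c) * ‖v‖^2) := by
      intro v
      have harg : -((1/2 - c : ℝ) : ℂ) * (‖v‖:ℂ)^2 + 0 * ((inner ℝ (0:EuclideanSpace ℝ (Fin n)) v : ℝ) : ℂ)
          = ((-(1/2 - c) * ‖v‖^2 : ℝ) : ℂ) := by
        push_cast
        ring
      rw [harg, ← Complex.ofReal_exp, Complex.norm_of_nonneg (Real.exp_pos _).le]
    simpa only [h6] using h5
  have hbound : Integrable (Function.uncurry F) ((volume.restrict cube).prod volume) := by
    have hg : Integrable (fun p : (Fin m → ℝ) × EuclideanSpace ℝ (Fin n) =>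
        (1:ℝ) * Real.exp (-(1/2 - c) * ‖p.2‖^2)) ((volume.restrict cube).prod volume) :=
      Integrable.mul_prod (integrable_const 1) hgauss_int
    have hae : ∀ᵐ p : (Fin m → ℝ) × EuclideanSpace ℝ (Fin n)
        ∂((volume.restrict cube).prod volume), p.1 ∈ cube := by
      rw [MeasureTheory.ae_iff]
      have hset : {p : (Fin m → ℝ) × EuclideanSpace ℝ (Fin n) | ¬ p.1 ∈ cube}
          = (cubeᶜ) ×ˢ (Set.univ : Set (EuclideanSpace ℝ (Fin n))) := by
        ext p
        simp [Set.mem_prod]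
      rw [hset, Measure.prod_prod, Measure.restrict_apply hcubeM.compl]
      simp
    apply Integrable.mono' hg hFcont.aestronglyMeasurable
    filter_upwards [hae] with p hp
    rw [one_mul]
    simp only [hF, Function.uncurry]
    rw [norm_mul, Complex.norm_real, Real.norm_eq_abs, Complex.norm_exp]
    have hP : |∏ i, (1 - |p.1 i|)| ≤ 1 := by
      rw [Finset.abs_prod]
      apply Finset.prod_le_one (fun i _ => abs_nonneg _)
      intro i _
      have h1 := hp i (Set.mem_univ i)
      have h2 : |p.1 i| ≤ 1 := abs_le.mpr ⟨h1.1, h1.2⟩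
      rw [abs_le]
      constructor <;> [linarith [abs_nonneg (p.1 i)]; linarith [abs_nonneg (p.1 i)]]
    have hwre : (-(‖p.2‖:ℂ)^2/2 + Complex.I * z
        * ((qf (∑ i, p.1 i • Q i) p.2 : ℝ) : ℂ)).re
        = -‖p.2‖^2/2 - z.im * qf (∑ i, p.1 i • Q i) p.2 := by
      simp [Complex.add_re, Complex.div_re, Complex.mul_re, Complex.mul_im,
        Complex.I_re, Complex.I_im, Complex.ofReal_re, Complex.ofReal_im, Complex.normSq,
        ← Complex.ofReal_pow]
      ring
    rw [hwre]
    have h6 : |z.im * qf (∑ i, p.1 i • Q i) p.2| ≤ c * ‖p.2‖^2 := by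
      rw [abs_mul]
      calc |z.im| * |qf (∑ i, p.1 i • Q i) p.2| ≤ 1 * (c * ‖p.2‖^2) :=
        mul_le_mul hzim (hqb p.1 hp p.2) (abs_nonneg _) zero_le_one
      _ = c * ‖p.2‖^2 := one_mul _
    have h7 := abs_le.mp h6
    calc |∏ i, (1 - |p.1 i|)| * Real.exp (-‖p.2‖^2/2 - z.im * qf (∑ i, p.1 i • Q i) p.2)
        ≤ 1 * Real.exp (-(1/2 - c) * ‖p.2‖^2) := by
          apply mul_le_mul hP _ (Real.exp_pos _).le zero_le_one
          apply Real.exp_le_exp.mpr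
          nlinarith [h7.1, h7.2]
      _ = Real.exp (-(1/2 - c) * ‖p.2‖^2) := one_mul _
  -- gaussian integral per t
  have hgauss : ∀ t ∈ cube, (∫ x : EuclideanSpace ℝ (Fin n), F t x)
      = ((∏ i, (1 - |t i|) : ℝ) : ℂ) * ∏ k, ((Real.pi : ℂ)
          / ((1:ℂ)/2 - Complex.I * z * ((hAtH t).eigenvalues k : ℂ))) ^ ((1:ℂ)/2) := by
    intro t ht
    simp only [hF]
    rw [MeasureTheory.integral_const_mul]
    congr 1
    exact gauss_diag (hAtH t) z (hre t ht)
  -- combine with the prefactor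
  have hfin : ∀ t ∈ cube,
      (((2 * Real.pi) ^ (-(n : ℝ) / 2) : ℝ) : ℂ) * ∫ x : EuclideanSpace ℝ (Fin n), F t x
      = ((∏ i, (1 - |t i|) : ℝ) : ℂ) * ∏ k,
          ((1:ℂ) - 2 * z * Complex.I * ((hAtH t).eigenvalues k : ℂ)) ^ (-(1:ℂ)/2) := by
    intro t ht
    rw [hgauss t ht]
    have hterm : ∀ k, ((Real.pi : ℂ)
        / ((1:ℂ)/2 - Complex.I * z * ((hAtH t).eigenvalues k : ℂ))) ^ ((1:ℂ)/2)
        = ((2 * Real.pi : ℝ) : ℂ) ^ ((1:ℂ)/2)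
          * ((1:ℂ) - 2 * z * Complex.I * ((hAtH t).eigenvalues k : ℂ)) ^ (-(1:ℂ)/2) := by
      intro k
      have hdre : 0 < ((1:ℂ) - 2 * z * Complex.I * ((hAtH t).eigenvalues k : ℂ)).re := by
        have h7 := hre t ht k
        have h8 : (1:ℂ) - 2 * z * Complex.I * ((hAtH t).eigenvalues k : ℂ)
            = 2 * ((1:ℂ)/2 - Complex.I * z * ((hAtH t).eigenvalues k : ℂ)) := by ring
        rw [h8]
        rw [show ((2:ℂ) * ((1:ℂ)/2 - Complex.I * z * ((hAtH t).eigenvalues k : ℂ))).re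
          = 2 * ((1:ℂ)/2 - Complex.I * z * ((hAtH t).eigenvalues k : ℂ)).re from by
            simp [Complex.mul_re]]
        linarith
      have h8 : (1:ℂ)/2 - Complex.I * z * ((hAtH t).eigenvalues k : ℂ)
          = ((1:ℂ) - 2 * z * Complex.I * ((hAtH t).eigenvalues k : ℂ)) / 2 := by ring
      rw [h8, half_pow hdre]
    rw [Finset.prod_congr rfl (fun k _ => hterm k), Finset.prod_mul_distrib,
      Finset.prod_const, Finset.card_univ, Fintype.card_fin]
    calc (((2 * Real.pi) ^ (-(n : ℝ) / 2) : ℝ) : ℂ) * (((∏ i, (1 - |t i|) : ℝ) : ℂ)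
          * ((((2 * Real.pi : ℝ) : ℂ) ^ ((1:ℂ)/2)) ^ n
            * ∏ k, ((1:ℂ) - 2 * z * Complex.I * ((hAtH t).eigenvalues k : ℂ)) ^ (-(1:ℂ)/2)))
        = ((((2 * Real.pi) ^ (-(n : ℝ) / 2) : ℝ) : ℂ) * (((2 * Real.pi : ℝ) : ℂ) ^ ((1:ℂ)/2)) ^ n)
          * (((∏ i, (1 - |t i|) : ℝ) : ℂ)
            * ∏ k, ((1:ℂ) - 2 * z * Complex.I * ((hAtH t).eigenvalues k : ℂ)) ^ (-(1:ℂ)/2)) := by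
          ring
      _ = _ := by rw [prefactor_cancel n, one_mul]
  -- final assembly
  calc (((2 * Real.pi) ^ (-(n : ℝ) / 2) : ℝ) : ℂ) *
      ∫ x : EuclideanSpace ℝ (Fin n),
        (Real.exp (-‖x‖ ^ 2 / 2) : ℂ) *
          ∏ i, sinc2 (z * (((1 / 2 : ℝ) * ∑ j, (Q i).mulVec (fun k => x k) j * x j : ℝ) : ℂ))
      = (((2 * Real.pi) ^ (-(n : ℝ) / 2) : ℝ) : ℂ) *
          ∫ x : EuclideanSpace ℝ (Fin n), ∫ t in cube, F t x := by
        congr 1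
        exact integral_congr_ae (Filter.Eventually.of_forall hsinc)
    _ = (((2 * Real.pi) ^ (-(n : ℝ) / 2) : ℝ) : ℂ) *
          ∫ t in cube, ∫ x : EuclideanSpace ℝ (Fin n), F t x := by
        rw [MeasureTheory.integral_integral_swap hbound]
    _ = ∫ t in cube, (((2 * Real.pi) ^ (-(n : ℝ) / 2) : ℝ) : ℂ) *
          ∫ x : EuclideanSpace ℝ (Fin n), F t x :=
        (MeasureTheory.integral_const_mul _ _).symm
    _ = _ := by
        refine setIntegral_congr_fun hcubeM (fun t ht => ?_)
        exact hfin t ht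

end MainProof
end

section
/- Let g be a univariate complex polynomial of degree N > 0 with g(z) ≠ 0 for all |z| < β, where β > 1, and let h be a branch of log g on the disc |z| < β. Let T_k(z) = Σ_{i=0}^k h^{(i)}(0) z^i / i! be the degree-k Taylor polynomial of h at 0. Then |h(1) − T_k(1)| ≤ N / ((k+1) β^k (β−1)). -/
open Polynomial Metric

theorem stmt_10 (g : Polynomial ℂ) (N : ℕ) (hN : 0 < N) (hdeg : g.natDegree = N)
    (β : ℝ) (hβ : 1 < β) (hg : ∀ z : ℂ, ‖z‖ < β → g.eval z ≠ 0)
    (h : ℂ → ℂ) (hh : DifferentiableOn ℂ h (ball (0 : ℂ) β))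
    (hlog : ∀ z ∈ ball (0 : ℂ) β, Complex.exp (h z) = g.eval z) (k : ℕ) :
    ‖h 1 - ∑ i ∈ Finset.range (k + 1), iteratedDeriv i h 0 / (Nat.factorial i)‖ ≤
      N / ((k + 1) * β ^ k * (β - 1)) := by
  have hβ0 : (0:ℝ) < β := lt_trans one_pos hβ
  have h0mem : (0:ℂ) ∈ ball (0:ℂ) β := by simpa using hβ0
  have hg0 : g ≠ 0 := by
    intro hc
    exact hg 0 (by simpa using hβ0) (by simp [hc])
  have hgsplit : Splits g := IsAlgClosed.splits g
  set l : List ℂ := g.roots.toList with hl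
  have hlen : l.length = N := by
    rw [hl, Multiset.length_toList, (Polynomial.splits_iff_card_roots).mp hgsplit, hdeg]
  set ζ : Fin N → ℂ := fun j => l.get (Fin.cast hlen.symm j) with hζ
  have hζβ : ∀ j, β ≤ ‖ζ j‖ := by
    intro j
    by_contra hc
    have hmem : ζ j ∈ g.roots := by
      rw [← Multiset.mem_toList]
      exact l.get_mem _
    exact hg (ζ j) (lt_of_not_ge hc) ((Polynomial.mem_roots hg0).mp hmem)
  have hζ0 : ∀ j, ζ j ≠ 0 := by
    intro j hc
    have := hζβ j
    rw [hc] at this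
    simp at this
    linarith
  -- the Fin-indexed product over roots
  have hFin : ∀ (f : ℂ → ℂ), ∏ j : Fin N, f (ζ j) = (g.roots.map f).prod := by
    intro f
    have h1 : ∏ i : Fin l.length, f (l.get i) = (l.map f).prod := by
      simpa using Fin.prod_univ_get' l f
    have h2 : ∏ j : Fin N, f (ζ j) = ∏ i : Fin l.length, f (l.get i) := by
      rw [← (finCongr hlen).prod_comp (fun j => f (ζ j))]
      apply Finset.prod_congr rfl
      intro i _
      congr 1
    rw [h2, h1, ← Multiset.coe_toList g.roots, ← hl, Multiset.map_coe, Multiset.prod_coe]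
  have hprod : ∀ z : ℂ, g.eval z = g.leadingCoeff * ∏ j : Fin N, (z - ζ j) := by
    intro z
    conv_lhs => rw [hgsplit.eq_prod_roots]
    rw [eval_mul, eval_C, hFin (fun a => z - a)]
    congr 1
    rw [eval_multiset_prod, Multiset.map_map]
    congr 1
    apply Multiset.map_congr rfl
    intro a _
    simp
  have hfac : ∀ z : ℂ, g.eval z = g.eval 0 * ∏ j : Fin N, (1 - z / ζ j) := by
    intro z
    rw [hprod z, hprod 0, mul_assoc, ← Finset.prod_mul_distrib]
    congr 1
    apply Finset.prod_congr rfl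
    intro j _
    have := hζ0 j
    field_simp
    ring
  -- norms of z/ζ j
  have hzζ : ∀ z : ℂ, ‖z‖ < β → ∀ j, ‖z / ζ j‖ < 1 := by
    intro z hz j
    rw [norm_div, div_lt_one (lt_of_lt_of_le hβ0 (hζβ j))]
    exact lt_of_lt_of_le hz (hζβ j)
  have hslit : ∀ z : ℂ, ‖z‖ < β → ∀ j, 1 - z / ζ j ∈ Complex.slitPlane := by
    intro z hz j
    have := Complex.mem_slitPlane_of_norm_lt_one (z := -(z / ζ j)) (by simpa using hzζ z hz j)
    simpa [sub_eq_add_neg] using this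
  have hne : ∀ z : ℂ, ‖z‖ < β → ∀ j, 1 - z / ζ j ≠ 0 :=
    fun z hz j => Complex.slitPlane_ne_zero (hslit z hz j)
  -- the explicit branch H
  set H : ℂ → ℂ := fun z => h 0 + ∑ j : Fin N, Complex.log (1 - z / ζ j) with hH
  have hHdiff : ∀ z ∈ ball (0:ℂ) β, DifferentiableAt ℂ H z := by
    intro z hz
    rw [mem_ball_zero_iff] at hz
    apply (differentiableAt_const _).add
    apply DifferentiableAt.fun_sum
    intro j _
    exact DifferentiableAt.clog ((differentiableAt_const _).sub
      (differentiableAt_id.div_const _)) (hslit z hz j)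
  have hexpH : ∀ z ∈ ball (0:ℂ) β, Complex.exp (H z) = g.eval z := by
    intro z hz
    rw [mem_ball_zero_iff] at hz
    rw [hH, Complex.exp_add, Complex.exp_sum, hfac z, ← hlog 0 h0mem]
    congr 1
    apply Finset.prod_congr rfl
    intro j _
    exact Complex.exp_log (hne z hz j)
  -- h = H on the ball
  have hhH : ∀ z ∈ ball (0:ℂ) β, h z = H z := by
    intro z hz
    set F : ℂ → ℂ := fun w => h w - H w with hF
    have hFdiffAt : ∀ w ∈ ball (0:ℂ) β, DifferentiableAt ℂ F w := by
      intro w hw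
      exact (hh.differentiableAt (isOpen_ball.mem_nhds hw)).sub (hHdiff w hw)
    have hexpF : ∀ w ∈ ball (0:ℂ) β, Complex.exp (F w) = 1 := by
      intro w hw
      rw [hF]
      rw [Complex.exp_sub, hlog w hw, hexpH w hw, div_self]
      exact hg w (mem_ball_zero_iff.mp hw)
    have hder0 : ∀ w ∈ ball (0:ℂ) β, fderivWithin ℂ F (ball (0:ℂ) β) w = 0 := by
      intro w hw
      have hev : (fun u => Complex.exp (F u)) =ᶠ[nhds w] (fun _ => 1) :=
        Filter.eventuallyEq_of_mem (isOpen_ball.mem_nhds hw) hexpF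
      have h1 : deriv (fun u => Complex.exp (F u)) w = 0 := by
        rw [hev.deriv_eq]; simp
      rw [deriv_cexp (hFdiffAt w hw)] at h1
      have h2 : deriv F w = 0 := by
        rcases mul_eq_zero.mp h1 with hc | hc
        · exact absurd hc (Complex.exp_ne_zero _)
        · exact hc
      have h3 : HasDerivAt F 0 w := h2 ▸ (hFdiffAt w hw).hasDerivAt
      rw [fderivWithin_of_isOpen isOpen_ball hw]
      have := (hasDerivAt_iff_hasFDerivAt.mp h3).fderiv
      rw [this]
      ext
      simp
    have hconst : F z = F 0 :=
      (convex_ball (0:ℂ) β).is_const_of_fderivWithin_eq_zero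
        (fun w hw => (hFdiffAt w hw).differentiableWithinAt) hder0 hz h0mem
    have hF0 : F 0 = 0 := by
      rw [hF, hH]
      simp
    have := hconst.trans hF0
    rw [hF] at this
    exact sub_eq_zero.mp this
  -- Taylor coefficients
  set c : ℕ → ℂ := fun n => if n = 0 then h 0 else -∑ j : Fin N, ((ζ j)⁻¹ ^ n / (n:ℂ)) with hc
  have hsum : ∀ z : ℂ, ‖z‖ < β → HasSum (fun n => c n * z ^ n) (h z) := by
    intro z hz
    have hterm : ∀ j : Fin N, HasSum (fun n : ℕ => -((z / ζ j) ^ n / (n:ℂ)))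
        (Complex.log (1 - z / ζ j)) := by
      intro j
      simpa using (Complex.hasSum_taylorSeries_neg_log (hzζ z hz j)).neg
    have hS : HasSum (fun n : ℕ => ∑ j : Fin N, -((z / ζ j) ^ n / (n:ℂ)))
        (∑ j : Fin N, Complex.log (1 - z / ζ j)) := hasSum_sum (fun j _ => hterm j)
    have h0S : HasSum (fun n : ℕ => if n = 0 then h 0 else 0) (h 0) := hasSum_ite_eq 0 (h 0)
    have hadd := h0S.add hS
    have hfun : (fun n : ℕ => c n * z ^ n)
        = fun n : ℕ => (if n = 0 then h 0 else 0) + ∑ j : Fin N, -((z / ζ j) ^ n / (n:ℂ)) := by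
      funext n
      rcases Nat.eq_zero_or_pos n with rfl | hn
      · simp [hc]
      · have hn0 : n ≠ 0 := hn.ne'
        rw [hc]
        simp only [if_neg hn0]
        rw [zero_add, neg_mul, Finset.sum_mul, ← Finset.sum_neg_distrib]
        apply Finset.sum_congr rfl
        intro j _
        rw [div_eq_mul_inv z, mul_pow]
        ring
    rw [hfun]
    have h2 := hhH z (mem_ball_zero_iff.mpr hz)
    rw [h2, hH]
    exact hadd
  set p : FormalMultilinearSeries ℂ ℂ ℂ := FormalMultilinearSeries.ofScalars ℂ c with hp
  have hβinv0 : (0:ℝ) ≤ β⁻¹ := inv_nonneg.mpr hβ0.le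
  have hβinv1 : β⁻¹ < 1 := inv_lt_one_of_one_lt₀ hβ
  have hcb : ∀ n : ℕ, 1 ≤ n → ‖c n‖ ≤ N * β⁻¹ ^ n / n := by
    intro n hn
    rw [hc]
    simp only [if_neg (Nat.one_le_iff_ne_zero.mp hn)]
    rw [norm_neg]
    calc ‖∑ j : Fin N, (ζ j)⁻¹ ^ n / (n:ℂ)‖ ≤ ∑ j : Fin N, ‖(ζ j)⁻¹ ^ n / (n:ℂ)‖ :=
          norm_sum_le _ _
    _ ≤ ∑ _j : Fin N, β⁻¹ ^ n / n := by
        apply Finset.sum_le_sum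
        intro j _
        rw [norm_div, norm_pow, norm_inv, Complex.norm_natCast]
        have hζj : (0:ℝ) < ‖ζ j‖ := lt_of_lt_of_le hβ0 (hζβ j)
        gcongr
        exact hζβ j
    _ = N * β⁻¹ ^ n / n := by
        rw [Finset.sum_const, Finset.card_univ, Fintype.card_fin, nsmul_eq_mul]
        ring
  have hrad : 1 ≤ p.radius := by
    apply FormalMultilinearSeries.le_radius_of_bound _ (max ‖h 0‖ N) (r := 1)
    intro n
    rw [NNReal.coe_one, one_pow, mul_one, hp, FormalMultilinearSeries.ofScalars_norm]
    rcases Nat.eq_zero_or_pos n with rfl | hn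
    · rw [hc]
      simp
    · refine le_trans (hcb n hn) (le_trans ?_ (le_max_right _ _))
      calc (N:ℝ) * β⁻¹ ^ n / n ≤ N * 1 ^ n / 1 := by
            gcongr
            exact_mod_cast hn
      _ = N := by simp
  have hps : HasFPowerSeriesOnBall h p 0 1 := by
    refine ⟨hrad, one_pos, ?_⟩
    intro y hy
    have hy1 : ‖y‖ < 1 := by
      simpa [EMetric.mem_ball, ← ofReal_norm, ← NNReal.coe_lt_one,
        ENNReal.ofReal_lt_one] using hy
    have h6 : ∀ n : ℕ, (p n fun _ => y) = c n * y ^ n := by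
      intro n
      rw [hp, FormalMultilinearSeries.ofScalars_apply_eq, smul_eq_mul]
    simp only [h6, zero_add]
    exact hsum y (lt_trans hy1 hβ)
  have hiter : ∀ n : ℕ, iteratedDeriv n h 0 / (Nat.factorial n) = c n := by
    intro n
    have h1 := hps.factorial_smul (1:ℂ) n
    have h2 : iteratedDeriv n h 0 = (n.factorial : ℂ) * c n := by
      rw [iteratedDeriv_eq_iteratedFDeriv, ← h1, hp,
        FormalMultilinearSeries.ofScalars_apply_eq]
      simp [smul_eq_mul]
    have h7 : (n.factorial : ℂ) ≠ 0 := by exact_mod_cast n.factorial_ne_zero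
    rw [h2, mul_div_cancel_left₀ _ h7]
  have hs1 : HasSum c (h 1) := by
    have := hsum 1 (by simpa using hβ)
    simpa using this
  have hpartial : ∑ i ∈ Finset.range (k+1), iteratedDeriv i h 0 / (Nat.factorial i : ℂ)
      = ∑ i ∈ Finset.range (k+1), c i :=
    Finset.sum_congr rfl (fun i _ => hiter i)
  have htail : h 1 - ∑ i ∈ Finset.range (k+1), c i = ∑' n : ℕ, c (n + (k+1)) := by
    have h3 := Summable.sum_add_tsum_nat_add (f := c) (k+1) hs1.summable
    rw [hs1.tsum_eq] at h3
    rw [← h3]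
    ring
  rw [hpartial, htail]
  set D : ℝ := N * β⁻¹ ^ (k+1) / (k+1) with hD
  have hgeo : HasSum (fun n : ℕ => D * β⁻¹ ^ n) (D * (1 - β⁻¹)⁻¹) :=
    (hasSum_geometric_of_lt_one hβinv0 hβinv1).mul_left D
  have hbound : ∀ n : ℕ, ‖c (n + (k+1))‖ ≤ D * β⁻¹ ^ n := by
    intro n
    calc ‖c (n+(k+1))‖ ≤ N * β⁻¹ ^ (n+(k+1)) / (n+(k+1) : ℕ) := hcb _ (by omega)
    _ ≤ N * β⁻¹ ^ (n+(k+1)) / (k+1) := by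
        gcongr
        push_cast
        linarith [Nat.cast_nonneg (α := ℝ) n]
    _ = D * β⁻¹ ^ n := by
        rw [hD, pow_add]
        ring
  have hfinal := tsum_of_norm_bounded hgeo hbound
  refine le_trans hfinal (le_of_eq ?_)
  rw [hD]
  have hb1 : (0:ℝ) < β - 1 := by linarith
  have hb2 : (0:ℝ) < 1 - β⁻¹ := by linarith
  have hk1 : (0:ℝ) < (k:ℝ) + 1 := by positivity
  field_simp
  ring_nf
  field_simp
  rw [← mul_pow, mul_one_div_cancel hβ0.ne', one_pow]
end
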